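/- Let m ≥ 1 and n ≥ m be integers. The function r ↦ B_{m,n}(r) is differentiable on (0,∞), and, writing ρ = r/m and B_{m,n}'(r) for its derivative: for every r > 0 with r ≠ m, B_{m,n}'(r) = [ (n − r)/ρ + ( n − r − (1 − ρ^{n−m})/((1 − ρ)·ρ^{n−m}) )·B_{m,n}(r)/(1 − ρ) ] · B_{m,n}(r)/m; and at r = m, B_{m,n}'(m) = [ n − m + (1 + m + n − (1 + n − m)^2)·B_{m,n}(m)/2 ] · B_{m,n}(m)/m. -/

import Mathlib

/-- `a_j(r)` coefficients of the M/M/m/n queue. -/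
noncomputable def aCoef (m j : ℕ) (r : ℝ) : ℝ :=
  if j ≤ m then r ^ j / (Nat.factorial j : ℝ)
  else (r ^ m / (Nat.factorial m : ℝ)) * (r / (m : ℝ)) ^ (j - m)

/-- Blocking probability `B_{m,n}(r)` of the M/M/m/n queue with offered load `r`. -/
noncomputable def Bmn (m n : ℕ) (r : ℝ) : ℝ :=
  aCoef m n r / ∑ j ∈ Finset.range (n + 1), aCoef m j r

/-- Mean number in system `L_{m,n}(r)` of the M/M/m/n queue with offered load `r`. -/
noncomputable def Lmn (m n : ℕ) (r : ℝ) : ℝ :=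
  (∑ j ∈ Finset.range (n + 1), (j : ℝ) * aCoef m j r) /
    ∑ j ∈ Finset.range (n + 1), aCoef m j r

/-- Erlang-B formula `B_m(r)`. -/
noncomputable def erlangB (m : ℕ) (r : ℝ) : ℝ :=
  (r ^ m / (Nat.factorial m : ℝ)) / ∑ j ∈ Finset.range (m + 1), r ^ j / (Nat.factorial j : ℝ)

noncomputable def cCoef (m j : ℕ) : ℝ :=
  if j ≤ m then 1 / (Nat.factorial j : ℝ)
  else 1 / ((Nat.factorial m : ℝ) * (m : ℝ) ^ (j - m))

lemma cCoef_pos (m j : ℕ) (hm : 1 ≤ m) : 0 < cCoef m j := by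
  unfold cCoef
  have h1 : (0:ℝ) < (m:ℝ) := by exact_mod_cast hm
  split <;> positivity

lemma aCoef_eq (m j : ℕ) (r : ℝ) : aCoef m j r = cCoef m j * r ^ j := by
  unfold aCoef cCoef
  by_cases h : j ≤ m
  · simp only [h, if_true]; ring
  · simp only [h, if_false]
    push_neg at h
    have : r ^ m * r ^ (j - m) = r ^ j := by
      rw [← pow_add, Nat.add_sub_cancel' h.le]
    rw [div_pow]
    field_simp
    rw [this]

lemma jpow (j : ℕ) (r : ℝ) : r * ((j:ℝ) * r ^ (j-1)) = (j:ℝ) * r ^ j := by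
  cases j with
  | zero => simp
  | succ k => simp [pow_succ]; ring

lemma S_pos (m n : ℕ) (hm : 1 ≤ m) {r : ℝ} (hr : 0 < r) :
    0 < ∑ j ∈ Finset.range (n + 1), aCoef m j r := by
  apply Finset.sum_pos
  · intro j _
    rw [aCoef_eq]
    exact mul_pos (cCoef_pos m j hm) (pow_pos hr j)
  · exact ⟨0, Finset.mem_range.2 (Nat.succ_pos n)⟩

lemma B_hasDeriv (m n : ℕ) (hm : 1 ≤ m) {r : ℝ} (hr : 0 < r) :
    HasDerivAt (fun r => Bmn m n r)
      (aCoef m n r * ((n:ℝ) * (∑ j ∈ Finset.range (n+1), aCoef m j r)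
        - ∑ j ∈ Finset.range (n+1), (j:ℝ) * aCoef m j r)
        / (r * (∑ j ∈ Finset.range (n+1), aCoef m j r)^2)) r := by
  have hfun : (fun r => Bmn m n r)
      = fun r => (cCoef m n * r^n) / (∑ j ∈ Finset.range (n+1), cCoef m j * r^j) := by
    funext r
    simp only [Bmn, aCoef_eq]
  have hN : HasDerivAt (fun r : ℝ => cCoef m n * r^n) (cCoef m n * ((n:ℝ) * r^(n-1))) r :=
    (hasDerivAt_pow n r).const_mul _
  have hS : HasDerivAt (fun r : ℝ => ∑ j ∈ Finset.range (n+1), cCoef m j * r^j)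
      (∑ j ∈ Finset.range (n+1), cCoef m j * ((j:ℝ) * r^(j-1))) r :=
    HasDerivAt.fun_sum fun j _ => (hasDerivAt_pow j r).const_mul _
  have hSpos := S_pos m n hm (r := r) hr
  simp only [aCoef_eq] at hSpos ⊢
  have d := hN.div hS hSpos.ne'
  rw [hfun]
  set S := ∑ j ∈ Finset.range (n+1), cCoef m j * r^j with hSdef
  set S' := ∑ j ∈ Finset.range (n+1), cCoef m j * ((j:ℝ) * r^(j-1)) with hS'def
  set M := ∑ j ∈ Finset.range (n+1), (j:ℝ) * (cCoef m j * r^j) with hMdef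
  have hrS : r * S' = M := by
    rw [hS'def, hMdef, Finset.mul_sum]
    apply Finset.sum_congr rfl
    intro j _
    rw [← mul_assoc, mul_comm r (cCoef m j), mul_assoc, jpow]
    ring
  have hrN : r * (cCoef m n * ((n:ℝ) * r^(n-1))) = (n:ℝ) * (cCoef m n * r^n) := by
    rw [← mul_assoc, mul_comm r (cCoef m n), mul_assoc, jpow]
    ring
  refine d.congr_deriv (Eq.symm ?_)
  rw [div_eq_div_iff (mul_pos hr (pow_pos hSpos 2)).ne' (pow_pos hSpos 2).ne']
  linear_combination (cCoef m n * r^n) * S^2 * hrS - S^3 * hrN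

lemma a_succ_ge (m j : ℕ) (h : m ≤ j) (r : ℝ) :
    aCoef m (j+1) r = (r / (m:ℝ)) * aCoef m j r := by
  unfold aCoef
  rcases h.lt_or_eq with h' | h'
  · have h1 : ¬ (j + 1 ≤ m) := by omega
    have h2 : ¬ (j ≤ m) := by omega
    have h3 : j + 1 - m = (j - m) + 1 := by omega
    simp only [h1, h2, if_false, h3, pow_succ]
    ring
  · subst h'
    have h1 : ¬ (m + 1 ≤ m) := by omega
    simp only [h1, if_false, le_refl, if_true, Nat.add_sub_cancel_left, pow_one]
    ring

lemma a_succ_le (m j : ℕ) (h : j + 1 ≤ m) (r : ℝ) :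
    ((j:ℝ)+1) * aCoef m (j+1) r = r * aCoef m j r := by
  unfold aCoef
  have h2 : j ≤ m := by omega
  simp only [h, h2, if_true]
  rw [Nat.factorial_succ]
  have hj : (0:ℝ) < (Nat.factorial j : ℝ) := by exact_mod_cast j.factorial_pos
  field_simp
  push_cast
  ring

lemma a_ge (m n : ℕ) (h : m ≤ n) (r : ℝ) :
    aCoef m n r = aCoef m m r * (r / (m:ℝ)) ^ (n - m) := by
  unfold aCoef
  rcases h.lt_or_eq with h' | h'
  · have h1 : ¬ (n ≤ m) := by omega
    simp [h1]
  · subst h'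
    simp

lemma key_base (m : ℕ) (r : ℝ) : ∀ k, k ≤ m →
    r * (∑ j ∈ Finset.range (k+1), aCoef m j r)
      - (∑ j ∈ Finset.range (k+1), (j:ℝ) * aCoef m j r) = r * aCoef m k r := by
  intro k
  induction k with
  | zero => intro _; simp
  | succ k ih =>
    intro hk
    rw [Finset.sum_range_succ (fun j => aCoef m j r) (k+1),
      Finset.sum_range_succ (fun j => (j:ℝ) * aCoef m j r) (k+1)]
    have h1 := ih (by omega)
    have h2 := a_succ_le m k hk r
    push_cast
    linear_combination h1 - h2

lemma key_sum (m n : ℕ) (hm : 1 ≤ m) (hn : m ≤ n) (r : ℝ) :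
    r * (∑ j ∈ Finset.range (n+1), aCoef m j r)
      - (∑ j ∈ Finset.range (n+1), (j:ℝ) * aCoef m j r)
    = r * aCoef m n r
      - aCoef m m r * ∑ t ∈ Finset.range (n - m + 1), (t:ℝ) * (r / (m:ℝ)) ^ t := by
  induction n, hn using Nat.le_induction with
  | base =>
    rw [key_base m r m le_rfl]
    simp
  | succ n hn ih =>
    have hd : n + 1 - m = (n - m) + 1 := by omega
    rw [Finset.sum_range_succ (fun j => aCoef m j r) (n+1),
      Finset.sum_range_succ (fun j => (j:ℝ) * aCoef m j r) (n+1), hd,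
      Finset.sum_range_succ (fun t => (t:ℝ) * (r / (m:ℝ)) ^ t) (n - m + 1)]
    have han1 : aCoef m (n+1) r = (r / (m:ℝ)) * aCoef m n r := a_succ_ge m n hn r
    have han : aCoef m n r = aCoef m m r * (r / (m:ℝ)) ^ (n - m) := a_ge m n hn r
    have hm0 : ((m:ℝ)) ≠ 0 := by positivity
    have hmain : r * aCoef m n r - ((n:ℝ)+1) * aCoef m (n+1) r
        = - (aCoef m m r * (((n:ℝ)-(m:ℝ))+1) * (r/(m:ℝ))^(n-m+1)) := by
      rw [han1, han, pow_succ]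
      field_simp
      ring
    push_cast [Nat.cast_sub hn]
    linear_combination ih + hmain

lemma geo_sum (d : ℕ) (x : ℝ) :
    (1 - x)^2 * ∑ t ∈ Finset.range (d+1), (t:ℝ) * x ^ t
      = x * (1 - x ^ d) - (d:ℝ) * x ^ (d+1) * (1 - x) := by
  induction d with
  | zero => simp
  | succ d ih =>
    rw [Finset.sum_range_succ, mul_add]
    rw [ih]
    push_cast
    ring

lemma gauss_sum (d : ℕ) :
    ∑ t ∈ Finset.range (d+1), (t:ℝ) * (1:ℝ) ^ t = (d:ℝ) * ((d:ℝ)+1) / 2 := by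
  induction d with
  | zero => simp
  | succ d ih =>
    rw [Finset.sum_range_succ, ih]
    push_cast
    ring

/-- derivative of `r ↦ B_{m,n}(r)`. -/
theorem stmt_18 (m n : ℕ) (hm : 1 ≤ m) (hn : m ≤ n) :
    (∀ r : ℝ, 0 < r → DifferentiableAt ℝ (fun r => Bmn m n r) r) ∧
    (∀ r : ℝ, 0 < r → r ≠ (m : ℝ) →
      deriv (fun r => Bmn m n r) r =
        (((n : ℝ) - r) / (r / (m : ℝ)) +
            ((n : ℝ) - r -
                (1 - (r / (m : ℝ)) ^ (n - m)) / ((1 - r / (m : ℝ)) * (r / (m : ℝ)) ^ (n - m))) *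
              Bmn m n r / (1 - r / (m : ℝ))) *
          Bmn m n r / (m : ℝ)) ∧
    deriv (fun r => Bmn m n r) (m : ℝ) =
      ((n : ℝ) - (m : ℝ) +
          (1 + (m : ℝ) + (n : ℝ) - (1 + (n : ℝ) - (m : ℝ)) ^ 2) * Bmn m n (m : ℝ) / 2) *
        Bmn m n (m : ℝ) / (m : ℝ) := by
  have hmR : (0:ℝ) < (m:ℝ) := by exact_mod_cast hm
  have hm0 : ((m:ℝ)) ≠ 0 := hmR.ne'
  have hcast : ((n - m : ℕ) : ℝ) = (n:ℝ) - (m:ℝ) := by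
    push_cast [Nat.cast_sub hn]; ring
  refine ⟨fun r hr => (B_hasDeriv m n hm hr).differentiableAt, ?_, ?_⟩
  · intro r hr hrm
    rw [(B_hasDeriv m n hm hr).deriv]
    set x := r / (m:ℝ) with hxdef
    have hx0 : x ≠ 0 := by
      rw [hxdef]; exact div_ne_zero hr.ne' hm0
    have hx1 : 1 - x ≠ 0 := by
      rw [hxdef]
      intro h
      apply hrm
      have : r / (m:ℝ) = 1 := by linarith
      field_simp at this
      exact this
    have hxp : x ^ (n - m) ≠ 0 := pow_ne_zero _ hx0
    set S := ∑ j ∈ Finset.range (n+1), aCoef m j r with hSdef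
    set M := ∑ j ∈ Finset.range (n+1), (j:ℝ) * aCoef m j r with hMdef
    set SG := ∑ t ∈ Finset.range (n - m + 1), (t:ℝ) * x ^ t with hSGdef
    have hSpos := S_pos m n hm (r := r) hr
    have hS0 : S ≠ 0 := hSpos.ne'
    have hkey : M = r * S - r * aCoef m n r + aCoef m m r * SG := by
      have := key_sum m n hm hn r
      rw [← hSdef, ← hMdef, ← hxdef, ← hSGdef] at this
      linarith
    have hgeo := geo_sum (n - m) x
    rw [← hSGdef, hcast] at hgeo
    have han : aCoef m n r = aCoef m m r * x ^ (n - m) := a_ge m n hn r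
    have hSGe : SG = (x * (1 - x ^ (n-m)) - ((n:ℝ)-(m:ℝ)) * x ^ (n-m) * x * (1 - x))
        / (1 - x)^2 := by
      rw [eq_div_iff (pow_ne_zero 2 hx1)]
      rw [mul_comm SG ((1-x)^2)] 
      rw [hgeo, pow_succ]
      ring
    have hrx : r = (m:ℝ) * x := by
      rw [hxdef]; field_simp
    simp only [Bmn, ← hSdef, ← hxdef]
    rw [hkey, han, hSGe, hrx]
    have hampos : 0 < aCoef m m r := by
      rw [aCoef_eq]
      exact mul_pos (cCoef_pos m m hm) (pow_pos hr m)
    field_simp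
    ring
  · have hD := B_hasDeriv m n hm (r := (m:ℝ)) hmR
    rw [hD.deriv]
    set r := (m:ℝ) with hrdef
    have hx : r / (m:ℝ) = 1 := by rw [hrdef]; field_simp
    set S := ∑ j ∈ Finset.range (n+1), aCoef m j r with hSdef
    set M := ∑ j ∈ Finset.range (n+1), (j:ℝ) * aCoef m j r with hMdef
    have hSpos := S_pos m n hm (r := r) hmR
    have hS0 : S ≠ 0 := hSpos.ne'
    have hgauss := gauss_sum (n - m)
    rw [hcast] at hgauss
    have hkey : M = r * S - r * aCoef m n r
        + aCoef m m r * (((n:ℝ)-(m:ℝ)) * (((n:ℝ)-(m:ℝ))+1) / 2) := by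
      have h1 := key_sum m n hm hn r
      rw [← hSdef, ← hMdef, hx] at h1
      rw [hgauss] at h1
      linarith
    have han : aCoef m n r = aCoef m m r := by
      rw [a_ge m n hn r, hx, one_pow, mul_one]
    simp only [Bmn, ← hSdef, ← hrdef]
    rw [hkey, han]
    field_simp
    ring
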